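/- Every subgroup G of AGL(1,F_q) is of the form S(γ^((q-1)/d), b, H) for some divisor d of q-1, some b ∈ F_q, and some additive subgroup H of F_q such that the triple (γ^((q-1)/d), b, H) lies in S. -/
import Mathlib


open Matrix
open scoped Classical

abbrev GL2 (F : Type) [Field F] := GL (Fin 2) F

/-- `AGL(1,F)`: the subgroup of `GL(2,F)` of matrices of the form `[[a,b],[0,1]]`. -/
def AGL (F : Type) [Field F] : Subgroup (GL2 F) where
  carrier := {g | (g : Matrix (Fin 2) (Fin 2) F) 1 0 = 0 ∧
                  (g : Matrix (Fin 2) (Fin 2) F) 1 1 = 1}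
  one_mem' := by
    constructor <;> simp [Matrix.one_apply]
  mul_mem' := by
    rintro a b ⟨ha0, ha1⟩ ⟨hb0, hb1⟩
    constructor <;>
      simp [Units.val_mul, Matrix.mul_apply, Fin.sum_univ_two, ha0, ha1, hb0, hb1]
  inv_mem' := by
    rintro g ⟨h0, h1⟩
    have hdet : ((g : Matrix (Fin 2) (Fin 2) F) 0 0) ≠ 0 := by
      have hu : IsUnit ((g : Matrix (Fin 2) (Fin 2) F).det) :=
        (Matrix.isUnit_iff_isUnit_det _).1 g.isUnit
      rw [Matrix.det_fin_two, h0, h1] at hu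
      simpa using hu.ne_zero
    have hinv : ((g⁻¹ : GL2 F) : Matrix (Fin 2) (Fin 2) F)
        = ((g : Matrix (Fin 2) (Fin 2) F))⁻¹ := Matrix.coe_units_inv g
    constructor <;>
      simp [hinv, Matrix.inv_def, Matrix.adjugate_fin_two, Matrix.det_fin_two,
        h0, h1, hdet]

/-- Membership of a triple `(a,b,H)` in the set `𝒮`: `a ∈ F*`, `H` is an additive
subgroup of `F` closed under multiplication by the subfield `F_p(a)` generated by `a`,
and `b = 0` when `a = 1`. -/
def memS {F : Type} [Field F] (a b : F) (H : AddSubgroup F) : Prop :=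
  a ≠ 0 ∧ (a = 1 → b = 0) ∧ ∀ x ∈ Subfield.closure {a}, ∀ h ∈ H, x * h ∈ H

/-- `S(a,b,H)`: the subgroup of `GL(2,F)` generated by the matrix `[[a,b],[0,1]]`
together with the matrices `[[1,h],[0,1]]`, `h ∈ H`. -/
def Sgrp {F : Type} [Field F] (a b : F) (H : AddSubgroup F) : Subgroup (GL2 F) :=
  Subgroup.closure {g : GL2 F |
    (g : Matrix (Fin 2) (Fin 2) F) = !![a, b; 0, 1] ∨
    ∃ h ∈ H, (g : Matrix (Fin 2) (Fin 2) F) = !![1, h; 0, 1]}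

/-- `pPow p d` is `p(d)`: the smallest (positive) power of `p` that is `≡ 1 (mod d)`. -/
noncomputable def pPow (p d : ℕ) : ℕ := sInf {m | (∃ k : ℕ, 1 ≤ k ∧ m = p ^ k) ∧ m % d = 1 % d}

section helpers

variable {F : Type} [Field F]

lemma agl_e00_ne_zero {g : GL2 F} (hg : g ∈ AGL F) :
    (g : Matrix (Fin 2) (Fin 2) F) 0 0 ≠ 0 := by
  have hu : IsUnit ((g : Matrix (Fin 2) (Fin 2) F).det) :=
    (Matrix.isUnit_iff_isUnit_det _).1 g.isUnit
  rw [Matrix.det_fin_two, hg.1, hg.2] at hu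
  simpa using hu.ne_zero

lemma agl_mul_entries (g h : GL2 F) (hg : g ∈ AGL F) (hh : h ∈ AGL F) :
    ((g * h : GL2 F) : Matrix (Fin 2) (Fin 2) F) 0 0
      = (g : Matrix (Fin 2) (Fin 2) F) 0 0 * (h : Matrix (Fin 2) (Fin 2) F) 0 0 ∧
    ((g * h : GL2 F) : Matrix (Fin 2) (Fin 2) F) 0 1
      = (g : Matrix (Fin 2) (Fin 2) F) 0 0 * (h : Matrix (Fin 2) (Fin 2) F) 0 1
        + (g : Matrix (Fin 2) (Fin 2) F) 0 1 := by
  constructor <;>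
    simp [Units.val_mul, Matrix.mul_apply, Fin.sum_univ_two, hg.1, hg.2, hh.1, hh.2]

lemma agl_one_entries :
    ((1 : GL2 F) : Matrix (Fin 2) (Fin 2) F) 0 0 = 1 ∧
    ((1 : GL2 F) : Matrix (Fin 2) (Fin 2) F) 0 1 = 0 := by
  constructor <;> simp [Matrix.one_apply]

lemma agl_inv_entries (g : GL2 F) (hg : g ∈ AGL F) :
    ((g⁻¹ : GL2 F) : Matrix (Fin 2) (Fin 2) F) 0 0
      = ((g : Matrix (Fin 2) (Fin 2) F) 0 0)⁻¹ ∧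
    ((g⁻¹ : GL2 F) : Matrix (Fin 2) (Fin 2) F) 0 1
      = -(((g : Matrix (Fin 2) (Fin 2) F) 0 0)⁻¹ * (g : Matrix (Fin 2) (Fin 2) F) 0 1) := by
  have hgi : g⁻¹ ∈ AGL F := (AGL F).inv_mem hg
  have hmul := agl_mul_entries g g⁻¹ hg hgi
  have h1 : (g * g⁻¹ : GL2 F) = 1 := mul_inv_cancel g
  rw [h1, agl_one_entries.1, agl_one_entries.2] at hmul
  have h00 : (g : Matrix (Fin 2) (Fin 2) F) 0 0
      * ((g⁻¹ : GL2 F) : Matrix (Fin 2) (Fin 2) F) 0 0 = 1 := hmul.1.symm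
  have hne := agl_e00_ne_zero hg
  constructor
  · exact (inv_eq_of_mul_eq_one_right h00).symm
  · have h01 : (g : Matrix (Fin 2) (Fin 2) F) 0 0
        * ((g⁻¹ : GL2 F) : Matrix (Fin 2) (Fin 2) F) 0 1
        + (g : Matrix (Fin 2) (Fin 2) F) 0 1 = 0 := hmul.2.symm
    apply mul_left_cancel₀ hne
    rw [mul_neg, ← mul_assoc, mul_inv_cancel₀ hne, one_mul]
    linear_combination h01

lemma agl_coe_eq (g : GL2 F) (hg : g ∈ AGL F) :
    (g : Matrix (Fin 2) (Fin 2) F)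
      = !![(g : Matrix (Fin 2) (Fin 2) F) 0 0, (g : Matrix (Fin 2) (Fin 2) F) 0 1; 0, 1] := by
  conv_lhs => rw [Matrix.eta_fin_two (g : Matrix (Fin 2) (Fin 2) F)]
  rw [hg.1, hg.2]

lemma agl_pow_entries (g : GL2 F) (hg : g ∈ AGL F) (k : ℕ) :
    g ^ k ∈ AGL F ∧ ((g ^ k : GL2 F) : Matrix (Fin 2) (Fin 2) F) 0 0
      = ((g : Matrix (Fin 2) (Fin 2) F) 0 0) ^ k := by
  induction k with
  | zero =>
    refine ⟨by rw [pow_zero]; exact (AGL F).one_mem, ?_⟩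
    rw [pow_zero, pow_zero]
    exact (agl_one_entries (F := F)).1
  | succ n ih =>
    have hmem : g ^ (n + 1) ∈ AGL F := by rw [pow_succ]; exact (AGL F).mul_mem ih.1 hg
    refine ⟨hmem, ?_⟩
    rw [pow_succ, (agl_mul_entries _ g ih.1 hg).1, ih.2, pow_succ]

end helpers
/-- The set of `x` with `x • H ⊆ H` is a subfield of a finite field. -/
def mulStab {F : Type} [Field F] [Fintype F] (H : AddSubgroup F) : Subfield F where
  carrier := {x | ∀ h ∈ H, x * h ∈ H}
  zero_mem' := fun h _ => by rw [zero_mul]; exact H.zero_mem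
  one_mem' := fun h hh => by rwa [one_mul]
  add_mem' := fun {x y} hx hy h hh => by
    rw [add_mul]; exact H.add_mem (hx h hh) (hy h hh)
  neg_mem' := fun {x} hx h hh => by rw [neg_mul]; exact H.neg_mem (hx h hh)
  mul_mem' := fun {x y} hx hy h hh => by rw [mul_assoc]; exact hx _ (hy h hh)
  inv_mem' := by
    intro x hx
    rcases eq_or_ne x 0 with rfl | hx0
    · intro h _; rw [_root_.inv_zero, zero_mul]; exact H.zero_mem
    · have hcard : 2 ≤ Fintype.card F := Fintype.one_lt_card
      have h1 : x ^ (Fintype.card F - 1) = 1 :=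
        FiniteField.pow_card_sub_one_eq_one x hx0
      have hinv : x⁻¹ = x ^ (Fintype.card F - 2) := by
        have hmul : x ^ (Fintype.card F - 2) * x = 1 := by
          rw [← pow_succ, show Fintype.card F - 2 + 1 = Fintype.card F - 1 by omega]
          exact h1
        exact (eq_inv_of_mul_eq_one_left hmul).symm
      rw [hinv]
      have hpow : ∀ k : ℕ, ∀ h ∈ H, x ^ k * h ∈ H := by
        intro k
        induction k with
        | zero => intro h hh; rwa [pow_zero, one_mul]
        | succ n ih => intro h hh; rw [pow_succ, mul_assoc]
                       exact ih _ (hx h hh)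
      exact hpow _
/-- Every subgroup of `AGL(1,F_q)` is of the form `S(γ^((q-1)/d), b, H)` with
`d ∣ q-1` and `(γ^((q-1)/d), b, H) ∈ 𝒮`. -/
theorem stmt6 (F : Type) [Field F] [Fintype F] (q : ℕ) (hq : Fintype.card F = q)
    (γ : F) (hγ0 : γ ≠ 0) (hγ : ∀ x : F, x ≠ 0 → ∃ k : ℕ, x = γ ^ k)
    (G : Subgroup (GL2 F)) (hG : G ≤ AGL F) :
    ∃ (d : ℕ) (b : F) (H : AddSubgroup F), d ∣ q - 1 ∧
      memS (γ ^ ((q - 1) / d)) b H ∧ G = Sgrp (γ ^ ((q - 1) / d)) b H := by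
  classical
  have hq2 : 2 ≤ q := hq ▸ Fintype.one_lt_card
  -- the set of top-left entries of elements of G
  set T : Set F := {x | ∃ g ∈ G, (g : Matrix (Fin 2) (Fin 2) F) 0 0 = x} with hT
  have hT1 : (1 : F) ∈ T := ⟨1, G.one_mem, (agl_one_entries (F := F)).1⟩
  have hTne : ∀ x ∈ T, x ≠ 0 := by
    rintro x ⟨g, hg, rfl⟩; exact agl_e00_ne_zero (hG hg)
  have hTmul : ∀ x ∈ T, ∀ y ∈ T, x * y ∈ T := by
    rintro x ⟨g, hg, rfl⟩ y ⟨g', hg', rfl⟩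
    exact ⟨g * g', G.mul_mem hg hg', (agl_mul_entries g g' (hG hg) (hG hg')).1⟩
  have hTinv : ∀ x ∈ T, x⁻¹ ∈ T := by
    rintro x ⟨g, hg, rfl⟩
    exact ⟨g⁻¹, G.inv_mem hg, (agl_inv_entries g (hG hg)).1⟩
  have hTpow : ∀ x ∈ T, ∀ k : ℕ, x ^ k ∈ T := by
    intro x hx k
    induction k with
    | zero => rw [pow_zero]; exact hT1
    | succ n ih => rw [pow_succ]; exact hTmul _ ih _ hx
  have hγq : γ ^ (q - 1) = 1 := by
    rw [← hq]; exact FiniteField.pow_card_sub_one_eq_one γ hγ0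
  -- the minimal positive exponent m with γ^m ∈ T
  set E : Set ℕ := {k | 0 < k ∧ γ ^ k ∈ T} with hE
  have hEq1 : q - 1 ∈ E := ⟨by omega, by rw [hγq]; exact hT1⟩
  set m : ℕ := sInf E with hm
  obtain ⟨hm0, hmT⟩ : 0 < m ∧ γ ^ m ∈ T := Nat.sInf_mem ⟨_, hEq1⟩
  have hdvd : ∀ j : ℕ, γ ^ j ∈ T → m ∣ j := by
    intro j hj
    by_contra hnd
    have hr0 : j % m ≠ 0 := fun h => hnd (Nat.dvd_of_mod_eq_zero h)
    have hrT : γ ^ (j % m) ∈ T := by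
      have h1 : γ ^ (m * (j / m)) ∈ T := by rw [pow_mul]; exact hTpow _ hmT _
      have h3 : γ ^ j * (γ ^ (m * (j / m)))⁻¹ ∈ T := hTmul _ hj _ (hTinv _ h1)
      have hne : γ ^ (m * (j / m)) ≠ 0 := pow_ne_zero _ hγ0
      have he2 : γ ^ (m * (j / m)) * γ ^ (j % m) = γ ^ j := by
        rw [← pow_add, Nat.div_add_mod j m]
      have he : γ ^ j * (γ ^ (m * (j / m)))⁻¹ = γ ^ (j % m) := by
        rw [← he2, mul_comm (γ ^ (m * (j / m))), mul_assoc, mul_inv_cancel₀ hne, mul_one]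
      rwa [he] at h3
    have hle : m ≤ j % m := Nat.sInf_le ⟨Nat.pos_of_ne_zero hr0, hrT⟩
    have hlt : j % m < m := Nat.mod_lt _ hm0
    omega
  have hmq : m ∣ q - 1 := hdvd _ (by rw [hγq]; exact hT1)
  have hTchar : ∀ x ∈ T, ∃ k : ℕ, x = (γ ^ m) ^ k := by
    intro x hx
    obtain ⟨j, rfl⟩ := hγ x (hTne x hx)
    obtain ⟨k, rfl⟩ := hdvd j hx
    exact ⟨k, by rw [← pow_mul]⟩
  set a : F := γ ^ m with ha
  have ha0 : a ≠ 0 := pow_ne_zero _ hγ0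
  obtain ⟨g₀, hg₀G, hg₀00⟩ : ∃ g ∈ G, (g : Matrix (Fin 2) (Fin 2) F) 0 0 = a := hmT
  have hg₀A : g₀ ∈ AGL F := hG hg₀G
  -- the additive subgroup H
  set H : AddSubgroup F :=
    { carrier := {h | ∃ g ∈ G, (g : Matrix (Fin 2) (Fin 2) F) = !![1, h; 0, 1]},
      zero_mem' := ⟨1, G.one_mem, by rw [Units.val_one, Matrix.one_fin_two]⟩,
      add_mem' := by
        rintro h₁ h₂ ⟨g₁, hg₁, he₁⟩ ⟨g₂, hg₂, he₂⟩
        refine ⟨g₁ * g₂, G.mul_mem hg₁ hg₂, ?_⟩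
        rw [Units.val_mul, he₁, he₂]
        ext i j
        fin_cases i <;> fin_cases j <;>
          simp [Matrix.mul_apply, Fin.sum_univ_two] <;> ring
      neg_mem' := by
        rintro h ⟨g, hgG', he⟩
        have hgA : g ∈ AGL F := ⟨by rw [he]; simp, by rw [he]; simp⟩
        have h00 : (g : Matrix (Fin 2) (Fin 2) F) 0 0 = 1 := by rw [he]; simp
        have h01 : (g : Matrix (Fin 2) (Fin 2) F) 0 1 = h := by rw [he]; simp
        refine ⟨g⁻¹, G.inv_mem hgG', ?_⟩
        rw [agl_coe_eq g⁻¹ ((AGL F).inv_mem hgA), (agl_inv_entries g hgA).1,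
          (agl_inv_entries g hgA).2, h00, h01, inv_one, one_mul] } with hHdef
  have hHmem : ∀ h : F,
      h ∈ H ↔ ∃ g ∈ G, (g : Matrix (Fin 2) (Fin 2) F) = !![1, h; 0, 1] := fun _ => Iff.rfl
  -- b
  set b : F := if a = 1 then 0 else (g₀ : Matrix (Fin 2) (Fin 2) F) 0 1 with hb
  -- conjugation: a • H ⊆ H
  have haH : ∀ h ∈ H, a * h ∈ H := by
    intro h hh
    obtain ⟨g, hgG', he⟩ := (hHmem h).1 hh
    have hgA : g ∈ AGL F := ⟨by rw [he]; simp, by rw [he]; simp⟩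
    have h00 : (g : Matrix (Fin 2) (Fin 2) F) 0 0 = 1 := by rw [he]; simp
    have h01 : (g : Matrix (Fin 2) (Fin 2) F) 0 1 = h := by rw [he]; simp
    refine (hHmem _).2 ⟨g₀ * g * g₀⁻¹, G.mul_mem (G.mul_mem hg₀G hgG') (G.inv_mem hg₀G), ?_⟩
    have hpA : g₀ * g ∈ AGL F := (AGL F).mul_mem hg₀A hgA
    have hiA : g₀⁻¹ ∈ AGL F := (AGL F).inv_mem hg₀A
    have hwA : g₀ * g * g₀⁻¹ ∈ AGL F := (AGL F).mul_mem hpA hiA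
    have hp := agl_mul_entries g₀ g hg₀A hgA
    have hw := agl_mul_entries (g₀ * g) g₀⁻¹ hpA hiA
    have hi := agl_inv_entries g₀ hg₀A
    rw [agl_coe_eq _ hwA, hw.1, hw.2, hp.1, hp.2, hi.1, hi.2, h00, h01, hg₀00]
    ext i j
    fin_cases i <;> fin_cases j <;> simp <;> field_simp <;> ring
  -- the subfield condition
  have hK : ∀ x ∈ Subfield.closure {a}, ∀ h ∈ H, x * h ∈ H := by
    intro x hx
    have hle : Subfield.closure {a} ≤ mulStab H := by
      rw [Subfield.closure_le]
      intro y hy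
      rw [Set.mem_singleton_iff] at hy
      subst hy
      exact haH
    exact hle hx
  -- the divisor d
  have hq1 : q - 1 ≠ 0 := by omega
  have hqd : (q - 1) / ((q - 1) / m) = m := Nat.div_div_self hmq hq1
  refine ⟨(q - 1) / m, b, H, Nat.div_dvd_of_dvd hmq, ?_, ?_⟩
  · rw [hqd, ← ha]
    exact ⟨ha0, fun h1 => if_pos h1, hK⟩
  · rw [hqd, ← ha]
    -- G = Sgrp a b H
    apply le_antisymm
    · -- G ≤ Sgrp
      intro g hgG'
      have hgA : g ∈ AGL F := hG hgG'
      obtain ⟨k, hk⟩ := hTchar _ ⟨g, hgG', rfl⟩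
      have hpk := agl_pow_entries g₀ hg₀A k
      rw [hg₀00] at hpk
      have hkG : g₀ ^ k ∈ G := G.pow_mem hg₀G k
      have hwG : g * (g₀ ^ k)⁻¹ ∈ G := G.mul_mem hgG' (G.inv_mem hkG)
      have hwA : g * (g₀ ^ k)⁻¹ ∈ AGL F := hG hwG
      have hw00 : ((g * (g₀ ^ k)⁻¹ : GL2 F) : Matrix (Fin 2) (Fin 2) F) 0 0 = 1 := by
        rw [(agl_mul_entries g (g₀ ^ k)⁻¹ hgA ((AGL F).inv_mem hpk.1)).1,
          (agl_inv_entries _ hpk.1).1, hpk.2, ← hk]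
        exact mul_inv_cancel₀ (hTne _ ⟨g, hgG', rfl⟩)
      have hwcoe := agl_coe_eq _ hwA
      rw [hw00] at hwcoe
      have hwH : ((g * (g₀ ^ k)⁻¹ : GL2 F) : Matrix (Fin 2) (Fin 2) F) 0 1 ∈ H :=
        (hHmem _).2 ⟨_, hwG, hwcoe⟩
      have hwS : g * (g₀ ^ k)⁻¹ ∈ Sgrp a b H :=
        Subgroup.subset_closure (Or.inr ⟨_, hwH, hwcoe⟩)
      have hg₀S : g₀ ∈ Sgrp a b H := by
        by_cases ha1 : a = 1
        · have hcoe := agl_coe_eq g₀ hg₀A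
          rw [hg₀00, ha1] at hcoe
          exact Subgroup.subset_closure
            (Or.inr ⟨_, (hHmem _).2 ⟨g₀, hg₀G, hcoe⟩, hcoe⟩)
        · have hcoe := agl_coe_eq g₀ hg₀A
          rw [hg₀00] at hcoe
          rw [hb, if_neg ha1]
          exact Subgroup.subset_closure (Or.inl hcoe)
      have : g = g * (g₀ ^ k)⁻¹ * g₀ ^ k := by rw [inv_mul_cancel_right]
      rw [this]
      exact (Sgrp a b H).mul_mem hwS ((Sgrp a b H).pow_mem hg₀S k)
    · -- Sgrp ≤ G
      rw [Sgrp]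
      rw [Subgroup.closure_le]
      rintro g (hgen | ⟨h, hh, hgen⟩)
      · by_cases ha1 : a = 1
        · have hb0 : b = 0 := if_pos ha1
          rw [ha1, hb0] at hgen
          have : g = 1 := Units.ext (by rw [hgen, Units.val_one, Matrix.one_fin_two])
          rw [this]; exact G.one_mem
        · have hcoe := agl_coe_eq g₀ hg₀A
          have hbv : b = (g₀ : Matrix (Fin 2) (Fin 2) F) 0 1 := by rw [hb, if_neg ha1]
          rw [hg₀00, ← hbv] at hcoe
          have : g = g₀ := Units.ext (hgen.trans hcoe.symm)
          rw [this]; exact hg₀G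
      · obtain ⟨g', hg'G, he'⟩ := (hHmem h).1 hh
        have : g = g' := Units.ext (hgen.trans he'.symm)
        rw [this]; exact hg'G
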